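/- (Dissipativity of the KdV operator A.) Let L > 0 and let w : ℝ → ℝ be three times continuously differentiable with w(0) = w(L) = 0 and w'(L) = 0. Then ∫₀ᴸ w(x) ( w'(x) + w'''(x) ) dx = (1/2) (w'(0))²; in particular ∫₀ᴸ w(x) ( −w'(x) − w'''(x) ) dx ≤ 0. -/

import Mathlib

/-- Dissipativity of the KdV operator `A w = −w' − w'''` on its domain:
for `w` of class `C³` with `w(0) = w(L) = w'(L) = 0`,
`∫₀ᴸ w (w' + w''') = (1/2) (w'(0))²`, hence `∫₀ᴸ w (−w' − w''') ≤ 0`. -/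
theorem kdv_operator_dissipative (L : ℝ) (hL : 0 < L) (w : ℝ → ℝ)
    (hw : ContDiff ℝ 3 w) (h0 : w 0 = 0) (hLval : w L = 0) (hL' : deriv w L = 0) :
    (∫ x in (0 : ℝ)..L, w x * (deriv w x + iteratedDeriv 3 w x)) = (1 / 2) * (deriv w 0) ^ 2 ∧
      (∫ x in (0 : ℝ)..L, w x * (-deriv w x - iteratedDeriv 3 w x)) ≤ 0 := by
  have hw1 : ContDiff ℝ 2 (deriv w) := (contDiff_succ_iff_deriv.mp (by norm_num at hw ⊢; exact hw)).2.2
  have hw2 : ContDiff ℝ 1 (deriv (deriv w)) :=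
    (contDiff_succ_iff_deriv.mp (by norm_num at hw1 ⊢; exact hw1)).2.2
  have hw3 : Continuous (deriv (deriv (deriv w))) :=
    ((contDiff_succ_iff_deriv.mp (show ContDiff ℝ (0+1) (deriv (deriv w)) from by exact_mod_cast hw2)).2.2).continuous
  have hd0 : ∀ x, HasDerivAt w (deriv w x) x :=
    fun x => (hw.differentiable (by norm_num)).differentiableAt.hasDerivAt
  have hd1 : ∀ x, HasDerivAt (deriv w) (deriv (deriv w) x) x :=
    fun x => (hw1.differentiable (by norm_num)).differentiableAt.hasDerivAt
  have hd2 : ∀ x, HasDerivAt (deriv (deriv w)) (deriv (deriv (deriv w)) x) x :=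
    fun x => (hw2.differentiable (by norm_num)).differentiableAt.hasDerivAt
  have hit : iteratedDeriv 3 w = deriv (deriv (deriv w)) := by
    rw [show (3:ℕ) = 2 + 1 from rfl, iteratedDeriv_succ, iteratedDeriv_succ, iteratedDeriv_succ,
      iteratedDeriv_zero]
  set F : ℝ → ℝ := fun x => (1/2) * (w x)^2 + w x * deriv (deriv w) x - (1/2) * (deriv w x)^2
    with hF
  have hFd : ∀ x, HasDerivAt F (w x * (deriv w x + iteratedDeriv 3 w x)) x := by
    intro x
    have h : HasDerivAt F ((1/2) * (2 * w x * deriv w x) +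
        (deriv w x * deriv (deriv w) x + w x * deriv (deriv (deriv w)) x) -
        (1/2) * (2 * deriv w x * deriv (deriv w) x)) x := by
      have := (((((hd0 x).pow 2).const_mul (1/2)).add
        ((hd0 x).mul (hd2 x))).sub (((hd1 x).pow 2).const_mul (1/2)))
      convert this using 1
      · rfl
      · rfl
      · funext y; simp only [hF, Pi.add_apply, Pi.sub_apply, Pi.mul_apply, Pi.pow_apply]
      push_cast
      ring
    convert h using 1
    rw [hit]; ring
  have hcont : Continuous fun x => w x * (deriv w x + iteratedDeriv 3 w x) := by
    rw [hit]
    exact (hw.continuous).mul ((hw1.continuous).add hw3)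
  have key : (∫ x in (0:ℝ)..L, w x * (deriv w x + iteratedDeriv 3 w x)) = F L - F 0 := by
    exact intervalIntegral.integral_eq_sub_of_hasDerivAt (fun x _ => hFd x)
      (hcont.intervalIntegrable 0 L)
  have hFL : F L = 0 := by simp [hF, hLval, hL']
  have hF0 : F 0 = -(1/2) * (deriv w 0)^2 := by simp [hF, h0]
  have heq : (∫ x in (0:ℝ)..L, w x * (deriv w x + iteratedDeriv 3 w x))
      = (1/2) * (deriv w 0)^2 := by rw [key, hFL, hF0]; ring
  refine ⟨heq, ?_⟩
  have hneg : (∫ x in (0:ℝ)..L, w x * (-deriv w x - iteratedDeriv 3 w x))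
      = -(∫ x in (0:ℝ)..L, w x * (deriv w x + iteratedDeriv 3 w x)) := by
    rw [← intervalIntegral.integral_neg]
    congr 1; funext x; ring
  rw [hneg, heq]
  nlinarith [sq_nonneg (deriv w 0)]
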